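/- Let I ⊆ P be a monomial ideal with minimal monomial generating set {t₁,…,t_s} (the monomials tᵢ generate I and none divides another), let π = (π₁,…,πₙ) where each πᵢ is a sequence of pairwise distinct elements of K, and let D_π(I) = ⟨D_π(t₁),…,D_π(t_s)⟩ be the distraction of I. Then for every monomial order σ, the set {D_π(t₁),…,D_π(t_s)} is the reduced σ-Gröbner basis of D_π(I); in particular LT_σ(D_π(I)) = I for every monomial order σ, and D_π(I) has GFan number 1. -/

import Mathlib

open MvPolynomial

/-- The leading monomial (σ-largest exponent vector in the support) of a polynomial. -/
noncomputable def leadMonomial {n : ℕ} {K : Type*} [Field K]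
    (m : MonomialOrder (Fin n)) (f : MvPolynomial (Fin n) K) : Fin n →₀ ℕ :=
  m.toSyn.symm (f.support.sup fun s => m.toSyn s)

/-- The leading term ideal of an ideal. -/
noncomputable def leadTermIdeal {n : ℕ} {K : Type*} [Field K]
    (m : MonomialOrder (Fin n)) (I : Ideal (MvPolynomial (Fin n) K)) :
    Ideal (MvPolynomial (Fin n) K) :=
  Ideal.span {g | ∃ f ∈ I, f ≠ 0 ∧ g = monomial (leadMonomial m f) (1 : K)}

/-- `G` is a σ-Gröbner basis of `I`: a finite set of nonzero elements of `I` whose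
leading monomials generate the leading term ideal of `I`. -/
def IsGroebnerBasis {n : ℕ} {K : Type*} [Field K]
    (m : MonomialOrder (Fin n)) (I : Ideal (MvPolynomial (Fin n) K))
    (G : Finset (MvPolynomial (Fin n) K)) : Prop :=
  (∀ g ∈ G, g ≠ 0 ∧ g ∈ I) ∧
    leadTermIdeal m I =
      Ideal.span ((fun g => monomial (leadMonomial m g) (1 : K)) '' (G : Set (MvPolynomial (Fin n) K)))

/-- `G` is a minimal monic σ-Gröbner basis of `I`. -/
def IsMinimalMonicGB {n : ℕ} {K : Type*} [Field K]
    (m : MonomialOrder (Fin n)) (I : Ideal (MvPolynomial (Fin n) K))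
    (G : Finset (MvPolynomial (Fin n) K)) : Prop :=
  IsGroebnerBasis m I G ∧
    (∀ g ∈ G, coeff (leadMonomial m g) g = 1) ∧
    (∀ g ∈ G, ∀ g' ∈ G, g ≠ g' → ¬ leadMonomial m g ≤ leadMonomial m g')

/-- A nonzero polynomial is factor-closed if some exponent vector of its support is
divisible (componentwise) by all exponent vectors of its support. -/
def FactorClosed {n : ℕ} {K : Type*} [Field K] (f : MvPolynomial (Fin n) K) : Prop :=
  ∃ t ∈ f.support, ∀ s ∈ f.support, s ≤ t

/-- `G` is a reduced σ-Gröbner basis of `I`. -/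
def IsReducedGB {n : ℕ} {K : Type*} [Field K]
    (m : MonomialOrder (Fin n)) (I : Ideal (MvPolynomial (Fin n) K))
    (G : Finset (MvPolynomial (Fin n) K)) : Prop :=
  IsMinimalMonicGB m I G ∧
    ∀ g ∈ G, ∀ s ∈ g.support, s ≠ leadMonomial m g →
      ∀ g' ∈ G, ¬ leadMonomial m g' ≤ s

/-- The distraction `∏ᵢ ∏_{j<αᵢ} (Xᵢ - c i j)` of the monomial with exponent vector `α`. -/
noncomputable def distraction {n : ℕ} {K : Type*} [Field K]
    (c : Fin n → ℕ → K) (α : Fin n →₀ ℕ) : MvPolynomial (Fin n) K :=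
  ∏ i : Fin n, ∏ j ∈ Finset.range (α i), (X i - C (c i j))

-- The distractions of a minimal monomial generating set of a monomial ideal `I` form
-- the reduced σ-Gröbner basis of the distraction ideal for every monomial order σ;
-- in particular `LT_σ(D_π(I)) = I` for all σ, and `D_π(I)` has GFan number 1.
section Aux
variable {n : ℕ} {K : Type*} [Field K] (c : Fin n → ℕ → K)

lemma distraction_zero : distraction c 0 = 1 := by
  simp [distraction]

lemma distraction_succ (β : Fin n →₀ ℕ) (i : Fin n) :
    distraction c (β + Finsupp.single i 1)
      = distraction c β * (X i - C (c i (β i))) := by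
  classical
  unfold distraction
  have h : ∀ k ∈ Finset.univ, (∏ j ∈ Finset.range ((β + Finsupp.single i 1 : Fin n →₀ ℕ) k), (X k - C (c k j)))
      = (∏ j ∈ Finset.range (β k), (X k - C (c k j)))
        * (if k = i then ((X i : MvPolynomial (Fin n) K) - C (c i (β i))) else 1) := by
    intro k _
    have happ : (β + Finsupp.single i 1 : Fin n →₀ ℕ) k = β k + (if k = i then 1 else 0) := by
      rw [Finsupp.add_apply, Finsupp.single_apply]
      congr 1
      simp [eq_comm]
    by_cases hk : k = i
    · subst hk
      rw [if_pos rfl] at happ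
      rw [happ, if_pos rfl, Finset.prod_range_succ]
    · rw [if_neg hk] at happ
      rw [happ, if_neg hk, mul_one, add_zero]
  rw [Finset.prod_congr rfl h, Finset.prod_mul_distrib]
  congr 1
  rw [Finset.prod_ite_eq' Finset.univ i
    (fun _ => (X i : MvPolynomial (Fin n) K) - C (c i (β i)))]
  simp

lemma support_X_sub_C (i : Fin n) (k : K) :
    ∀ v ∈ ((X i : MvPolynomial (Fin n) K) - C k).support, v = Finsupp.single i 1 ∨ v = 0 := by
  intro v hv
  by_contra hcon
  push_neg at hcon
  rw [mem_support_iff, coeff_sub, coeff_X', coeff_C] at hv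
  rw [if_neg (fun h => hcon.1 h.symm), if_neg (fun h => hcon.2 h.symm)] at hv
  simp at hv

lemma distraction_support_coeff (α : Fin n →₀ ℕ) :
    (∀ s ∈ (distraction c α).support, s ≤ α) ∧ coeff α (distraction c α) = 1 := by
  classical
  set d := ∑ i, α i with hd
  clear_value d
  induction d generalizing α with
  | zero =>
    have hα : α = 0 := by
      ext i
      have := (Finset.sum_eq_zero_iff.mp hd.symm) i (Finset.mem_univ i)
      simpa using this
    subst hα
    rw [distraction_zero]
    constructor
    · intro s hs
      simp only [mem_support_iff, coeff_one] at hs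
      by_cases h : (0 : Fin n →₀ ℕ) = s
      · exact le_of_eq h.symm
      · rw [if_neg h] at hs
        exact absurd rfl hs
    · simp
  | succ d ih =>
    have hex : ∃ i, α i ≠ 0 := by
      by_contra hcon
      push_neg at hcon
      simp [hcon] at hd
    obtain ⟨i, hi⟩ := hex
    set β := α - Finsupp.single i 1 with hβ
    have happ : ∀ k, α k = β k + if i = k then 1 else 0 := by
      intro k
      have hβk : β k = α k - (if i = k then 1 else 0) := by
        rw [hβ, Finsupp.coe_tsub, Pi.sub_apply, Finsupp.single_apply]
      by_cases hk : i = k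
      · rw [if_pos hk] at hβk ⊢
        subst hk
        omega
      · rw [if_neg hk] at hβk ⊢
        omega
    have hαβ : α = β + Finsupp.single i 1 := by
      ext k
      rw [Finsupp.add_apply, Finsupp.single_apply]
      exact happ k
    have hβd : d = ∑ k, β k := by
      have hsum : ∑ k, α k = (∑ k, β k) + 1 := by
        calc ∑ k, α k = ∑ k, (β k + if i = k then 1 else 0) :=
              Finset.sum_congr rfl (fun k _ => happ k)
          _ = (∑ k, β k) + ∑ k, (if i = k then 1 else 0) := Finset.sum_add_distrib
          _ = (∑ k, β k) + 1 := by simp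
      omega
    obtain ⟨ihs, ihc⟩ := ih β hβd
    rw [hαβ, distraction_succ]
    constructor
    · intro s hs
      have := MvPolynomial.support_mul _ _ hs
      rw [Finset.mem_add] at this
      obtain ⟨u, hu, v, hv, rfl⟩ := this
      have hu' := ihs u hu
      rcases support_X_sub_C i (c i (β i)) v hv with rfl | rfl
      · exact add_le_add hu' le_rfl
      · rw [add_zero]
        exact le_trans hu' le_self_add
    · rw [mul_sub, coeff_sub, coeff_mul_X, mul_comm _ (C (c i (β i))), coeff_C_mul, ihc]
      have hns : (β + Finsupp.single i 1) ∉ (distraction c β).support := by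
        intro hmem
        have := ihs _ hmem
        have := this i
        simp at this
      rw [notMem_support_iff.mp hns]
      ring

lemma distraction_support_le (α : Fin n →₀ ℕ) :
    ∀ s ∈ (distraction c α).support, s ≤ α := (distraction_support_coeff c α).1

lemma distraction_coeff (α : Fin n →₀ ℕ) :
    coeff α (distraction c α) = 1 := (distraction_support_coeff c α).2

lemma distraction_ne_zero (α : Fin n →₀ ℕ) : distraction c α ≠ 0 := by
  intro h
  have := distraction_coeff c α
  rw [h] at this
  simp at this

lemma leadMonomial_eq (m : MonomialOrder (Fin n)) {f : MvPolynomial (Fin n) K}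
    {α : Fin n →₀ ℕ} (h1 : coeff α f ≠ 0)
    (h2 : ∀ s ∈ f.support, m.toSyn s ≤ m.toSyn α) :
    leadMonomial m f = α := by
  have : (f.support.sup fun s => m.toSyn s) = m.toSyn α := by
    apply le_antisymm
    · exact Finset.sup_le h2
    · exact Finset.le_sup (f := fun s => m.toSyn s) (mem_support_iff.mpr h1)
  rw [leadMonomial, this, AddEquiv.symm_apply_apply]

lemma distraction_leadMonomial (m : MonomialOrder (Fin n)) (α : Fin n →₀ ℕ) :
    leadMonomial m (distraction c α) = α := by
  apply leadMonomial_eq m (by rw [distraction_coeff]; exact one_ne_zero)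
  intro s hs
  exact m.toSyn_monotone (distraction_support_le c α s hs)

lemma mul_distraction_mem_span (p : MvPolynomial (Fin n) K) :
    ∀ α, p * distraction c α ∈ Submodule.span K (distraction c '' Set.Ici α) := by
  induction p using MvPolynomial.induction_on with
  | C a =>
    intro α
    rw [← smul_eq_C_mul]
    exact Submodule.smul_mem _ a (Submodule.subset_span ⟨α, le_refl α, rfl⟩)
  | add p q hp hq =>
    intro α
    rw [add_mul]
    exact add_mem (hp α) (hq α)
  | mul_X p i hp =>
    intro α
    have key : p * X i * distraction c α
        = p * distraction c (α + Finsupp.single i 1)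
          + C (c i (α i)) * (p * distraction c α) := by
      rw [distraction_succ]
      ring
    rw [key]
    apply add_mem
    · exact Submodule.span_mono
        (Set.image_mono (Set.Ici_subset_Ici.mpr le_self_add))
        (hp (α + Finsupp.single i 1))
    · rw [← smul_eq_C_mul]
      exact Submodule.smul_mem _ _ (hp α)

lemma ideal_span_le_span (T' : Set (Fin n →₀ ℕ)) :
    ∀ f ∈ Ideal.span (distraction c '' T'),
      f ∈ Submodule.span K (distraction c '' {γ | ∃ t ∈ T', t ≤ γ}) := by
  set S : Set (Fin n →₀ ℕ) := {γ | ∃ t ∈ T', t ≤ γ} with hS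
  have hmul : ∀ (r : MvPolynomial (Fin n) K) (x : MvPolynomial (Fin n) K),
      x ∈ Submodule.span K (distraction c '' S) →
      r * x ∈ Submodule.span K (distraction c '' S) := by
    intro r x hx
    induction hx using Submodule.span_induction with
    | mem y hy =>
      obtain ⟨γ, hγ, rfl⟩ := hy
      apply Submodule.span_mono (Set.image_mono ?_) (mul_distraction_mem_span c r γ)
      intro δ hδ
      obtain ⟨t, ht, htγ⟩ := hγ
      exact ⟨t, ht, le_trans htγ hδ⟩
    | zero => rw [mul_zero]; exact zero_mem _
    | add y z _ _ hy hz => rw [mul_add]; exact add_mem hy hz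
    | smul a y _ hy => rw [mul_smul_comm]; exact Submodule.smul_mem _ _ hy
  intro f hf
  induction hf using Submodule.span_induction with
  | mem y hy =>
    obtain ⟨t, ht, rfl⟩ := hy
    exact Submodule.subset_span ⟨t, ⟨t, ht, le_refl t⟩, rfl⟩
  | zero => exact zero_mem _
  | add y z _ _ hy hz => exact add_mem hy hz
  | smul a y _ hy => exact hmul a y hy

end Aux

section Aux2
variable {n : ℕ} {K : Type*} [Field K] (c : Fin n → ℕ → K)

lemma leadMonomial_mem_of_mem_span (m : MonomialOrder (Fin n)) (S : Set (Fin n →₀ ℕ))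
    {f : MvPolynomial (Fin n) K}
    (hf : f ∈ Submodule.span K (distraction c '' S)) (hf0 : f ≠ 0) :
    leadMonomial m f ∈ S := by
  classical
  rw [Submodule.mem_span_set] at hf
  obtain ⟨l, hlsupp, hlsum⟩ := hf
  have hne : l.support.Nonempty := by
    by_contra h
    rw [Finset.not_nonempty_iff_eq_empty] at h
    apply hf0
    rw [← hlsum, Finsupp.sum, h, Finset.sum_empty]
  obtain ⟨g0, hg0, hmax⟩ :=
    Finset.exists_max_image l.support (fun g => m.toSyn (leadMonomial m g)) hne
  have hrep : ∀ g ∈ l.support, distraction c (leadMonomial m g) = g ∧ leadMonomial m g ∈ S := by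
    intro g hg
    obtain ⟨γ, hγ, rfl⟩ := hlsupp hg
    rw [distraction_leadMonomial]
    exact ⟨rfl, hγ⟩
  set γ0 := leadMonomial m g0 with hγ0
  have hcoefff : ∀ s, coeff s f = ∑ g ∈ l.support, l g * coeff s g := by
    intro s
    rw [← hlsum, Finsupp.sum, coeff_sum]
    exact Finset.sum_congr rfl (fun g _ => by rw [coeff_smul, smul_eq_mul])
  have hc0 : coeff γ0 f = l g0 := by
    rw [hcoefff]
    rw [Finset.sum_eq_single g0]
    · rw [← (hrep g0 hg0).1, ← hγ0, distraction_coeff, mul_one]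
    · intro g hg hne'
      by_cases hcz : coeff γ0 g = 0
      · rw [hcz, mul_zero]
      · exfalso
        have hDg := (hrep g hg).1
        have hle : γ0 ≤ leadMonomial m g := by
          have h' := distraction_support_le c (leadMonomial m g)
          rw [hDg] at h'
          exact h' γ0 (mem_support_iff.mpr hcz)
        have h1 : m.toSyn γ0 ≤ m.toSyn (leadMonomial m g) := m.toSyn_monotone hle
        have h2 := hmax g hg
        have heq : leadMonomial m g = γ0 := m.toSyn.injective (le_antisymm h2 h1)
        apply hne'
        rw [← hDg, heq, hγ0, (hrep g0 hg0).1]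
    · intro h
      exact absurd hg0 h
  have hlg0 : l g0 ≠ 0 := Finsupp.mem_support_iff.mp hg0
  have hsupf : ∀ s ∈ f.support, m.toSyn s ≤ m.toSyn γ0 := by
    intro s hs
    rw [mem_support_iff, hcoefff] at hs
    obtain ⟨g, hg, hgne⟩ : ∃ g ∈ l.support, l g * coeff s g ≠ 0 := by
      by_contra hcon
      push_neg at hcon
      exact hs (Finset.sum_eq_zero hcon)
    have hcs : coeff s g ≠ 0 := fun h => hgne (by rw [h, mul_zero])
    have hDg := (hrep g hg).1
    have hle : s ≤ leadMonomial m g := by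
      have h' := distraction_support_le c (leadMonomial m g)
      rw [hDg] at h'
      exact h' s (mem_support_iff.mpr hcs)
    exact le_trans (m.toSyn_monotone hle) (hmax g hg)
  have hfin : leadMonomial m f = γ0 := leadMonomial_eq m (by rw [hc0]; exact hlg0) hsupf
  rw [hfin]
  exact (hrep g0 hg0).2

lemma exists_le_leadMonomial (m : MonomialOrder (Fin n)) (T' : Set (Fin n →₀ ℕ))
    {f : MvPolynomial (Fin n) K}
    (hf : f ∈ Ideal.span (distraction c '' T')) (hf0 : f ≠ 0) :
    ∃ t ∈ T', t ≤ leadMonomial m f :=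
  leadMonomial_mem_of_mem_span c m _ (ideal_span_le_span c T' f hf) hf0

end Aux2

open scoped Classical in
theorem distraction_reduced_groebner_basis
    {n : ℕ} {K : Type*} [Field K]
    (T : Finset (Fin n →₀ ℕ))
    (I : Ideal (MvPolynomial (Fin n) K))
    (hgen : I = Ideal.span ((fun t => monomial t (1 : K)) '' (T : Set (Fin n →₀ ℕ))))
    (hmin : ∀ t ∈ T, ∀ t' ∈ T, t ≠ t' → ¬ t ≤ t')
    (c : Fin n → ℕ → K) (hc : ∀ i, Function.Injective (c i)) :
    ∀ m : MonomialOrder (Fin n),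
      IsReducedGB m (Ideal.span ((distraction c) '' (T : Set (Fin n →₀ ℕ))))
        (T.image (distraction c)) ∧
      leadTermIdeal m (Ideal.span ((distraction c) '' (T : Set (Fin n →₀ ℕ)))) = I := by
  intro m
  set J := Ideal.span ((distraction c) '' (T : Set (Fin n →₀ ℕ))) with hJ
  have hLMim : ((fun g => monomial (leadMonomial m g) (1 : K)) ''
      ((T.image (distraction c)) : Set (MvPolynomial (Fin n) K)))
      = (fun t => monomial t (1 : K)) '' (T : Set (Fin n →₀ ℕ)) := by
    rw [Finset.coe_image, ← Set.image_comp]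
    apply Set.image_congr
    intro t _
    simp only [Function.comp_apply]
    rw [distraction_leadMonomial]
  have hLT : leadTermIdeal m J = I := by
    apply le_antisymm
    · rw [leadTermIdeal, Ideal.span_le]
      rintro g ⟨f, hfJ, hf0, rfl⟩
      obtain ⟨t, htT, hle⟩ := exists_le_leadMonomial c m _ hfJ hf0
      rw [hgen]
      have heq : (monomial (leadMonomial m f) (1 : K))
          = monomial t 1 * monomial (leadMonomial m f - t) 1 := by
        rw [monomial_mul, one_mul, add_tsub_cancel_of_le hle]
      rw [SetLike.mem_coe, heq]
      exact Ideal.mul_mem_right _ _ (Ideal.subset_span ⟨t, htT, rfl⟩)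
    · rw [hgen, Ideal.span_le]
      rintro g ⟨t, htT, rfl⟩
      rw [SetLike.mem_coe, leadTermIdeal]
      apply Ideal.subset_span
      exact ⟨distraction c t, Ideal.subset_span ⟨t, htT, rfl⟩, distraction_ne_zero c t,
        by rw [distraction_leadMonomial]⟩
  refine ⟨⟨⟨⟨?_, ?_⟩, ?_, ?_⟩, ?_⟩, hLT⟩
  · intro g hg
    obtain ⟨t, htT, rfl⟩ := Finset.mem_image.mp hg
    exact ⟨distraction_ne_zero c t, Ideal.subset_span ⟨t, htT, rfl⟩⟩
  · rw [hLT, hLMim, ← hgen]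
  · intro g hg
    obtain ⟨t, htT, rfl⟩ := Finset.mem_image.mp hg
    rw [distraction_leadMonomial, distraction_coeff]
  · intro g hg g' hg' hne
    obtain ⟨t, htT, rfl⟩ := Finset.mem_image.mp hg
    obtain ⟨t', ht'T, rfl⟩ := Finset.mem_image.mp hg'
    have htt' : t ≠ t' := fun h => hne (by rw [h])
    rw [distraction_leadMonomial, distraction_leadMonomial]
    exact hmin t htT t' ht'T htt'
  · intro g hg s hsupp hsne g' hg'
    obtain ⟨t, htT, rfl⟩ := Finset.mem_image.mp hg
    obtain ⟨t', ht'T, rfl⟩ := Finset.mem_image.mp hg'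
    rw [distraction_leadMonomial]
    intro hle
    have hst : s ≤ t := distraction_support_le c t s hsupp
    by_cases htt' : t = t'
    · subst htt'
      apply hsne
      rw [distraction_leadMonomial]
      exact le_antisymm hst hle
    · exact hmin t' ht'T t htT (Ne.symm htt') (le_trans hle hst)
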